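/- Let A = {1,…,n} be a finite linearly ordered set and let G be any graph on A. Define ψ : A → B by ψ(x) = (x, χ_x) where χ_x(y) = 1 if x > y and {x,y} is not an edge of G, and χ_x(y) = 0 otherwise. Then ψ is a graph embedding of G into B, i.e., for all x ≠ y in A, {x,y} is an edge of G iff {ψ(x),ψ(y)} is an edge of B. -/
import Mathlib


/-- Vertices: pairs `(x, χ)` with `x ∈ A` and `χ : A \ {x} → ℤ/2`. -/
abbrev GVert (A : Type*) := Σ x : A, ({y : A // y ≠ x} → ZMod 2)

/-- Adjacency: `(x,χ)` and `(x',χ')` are adjacent iff `x ≠ x'` and `χ(x') + χ'(x) = 0`. -/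
def GAdj {A : Type*} (p q : GVert A) : Prop :=
  ∃ h : p.1 ≠ q.1, p.2 ⟨q.1, Ne.symm h⟩ + q.2 ⟨p.1, h⟩ = 0

/-- The embedding `ψ` of a graph `G` on `A = {1,…,n}`: `ψ(x) = (x, χ_x)` where
`χ_x(y) = 1` if `x > y` and `{x,y}` is not an edge of `G`, and `0` otherwise. -/
def psiG {n : ℕ} (G : SimpleGraph (Fin n)) [DecidableRel G.Adj]
    (x : Fin n) : GVert (Fin n) :=
  ⟨x, fun y => if y.1 < x ∧ ¬ G.Adj x y.1 then 1 else 0⟩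

theorem stmt4 {n : ℕ} (G : SimpleGraph (Fin n)) [DecidableRel G.Adj] :
    ∀ x y : Fin n, x ≠ y → (G.Adj x y ↔ GAdj (psiG G x) (psiG G y)) := by
  intro x y hxy
  have hlt : y < x ∨ x < y := (lt_or_gt_of_ne hxy).symm.imp id id
  constructor
  · intro hadj
    refine ⟨hxy, ?_⟩
    simp [psiG, hadj, hadj.symm]
  · rintro ⟨h, hsum⟩
    by_contra hna
    have hna' : ¬ G.Adj y x := fun h' => hna h'.symm
    rcases hlt with hl | hl
    · simp [psiG, hl, hna, hna', asymm hl] at hsum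
    · simp [psiG, hl, hna, hna', asymm hl] at hsum
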